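/- Let p be a prime and n = (p^p - 1)/(p - 1). The greatest common divisor of the polynomials (x + λ)^n - 1 for λ = 0, 1, …, p-1 in 𝔽_p[x] equals x^p - x - 1. In particular, exactly p elements α of the algebraic closure of 𝔽_p satisfy (α + λ)^n = 1 for all λ ∈ 𝔽_p, namely the roots of x^p - x - 1. -/

import Mathlib

open Polynomial Finset

section Stmt19Aux

variable (p : ℕ) [Fact p.Prime]

private lemma stmt19_prod_univ :
    (∏ c : ZMod p, (X - C c)) = (X : (ZMod p)[X]) ^ p - X := by
  have hlt : 1 < p := (Fact.out : p.Prime).one_lt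
  have hroots : roots ((X : (ZMod p)[X]) ^ p - X) = Finset.univ.val := by
    have h := FiniteField.roots_X_pow_card_sub_X (ZMod p)
    rwa [ZMod.card p] at h
  have hdvd := prod_multiset_X_sub_C_dvd ((X : (ZMod p)[X]) ^ p - X)
  rw [hroots, ← Finset.prod_eq_multiset_prod] at hdvd
  have hmonic : (∏ c : ZMod p, (X - C c) : (ZMod p)[X]).Monic :=
    monic_prod_of_monic _ _ fun c _ => monic_X_sub_C c
  have hdeg : (∏ c : ZMod p, (X - C c) : (ZMod p)[X]).natDegree = p := by
    rw [natDegree_prod _ _ fun c _ => X_sub_C_ne_zero c]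
    simp [natDegree_X_sub_C, ZMod.card]
  have hWmonic : ((X : (ZMod p)[X]) ^ p - X).Monic := by
    refine monic_X_pow_sub ?_
    rw [degree_X]
    exact_mod_cast hlt
  exact eq_of_dvd_of_natDegree_le_of_leadingCoeff hdvd
    (by rw [hdeg, FiniteField.X_pow_card_sub_X_natDegree_eq _ hlt])
    (by rw [hmonic.leadingCoeff, hWmonic.leadingCoeff])

private lemma stmt19_prod_sub (s : AlgebraicClosure (ZMod p)) :
    (∏ c : ZMod p, (s - algebraMap (ZMod p) (AlgebraicClosure (ZMod p)) c)) = s ^ p - s := by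
  have h := congrArg
    (fun q : (ZMod p)[X] =>
      eval s (q.map (algebraMap (ZMod p) (AlgebraicClosure (ZMod p)))))
    (stmt19_prod_univ p)
  simpa [Polynomial.map_prod, eval_prod] using h

private lemma stmt19_prod_add (s : AlgebraicClosure (ZMod p)) :
    (∏ c : ZMod p, (s + algebraMap (ZMod p) (AlgebraicClosure (ZMod p)) c)) = s ^ p - s := by
  rw [← stmt19_prod_sub p s]
  refine Finset.prod_equiv (Equiv.neg (ZMod p)) (by simp) ?_
  intro c _
  simp [Equiv.neg_apply, map_neg, sub_neg_eq_add]

private lemma stmt19_pow_iter (s : AlgebraicClosure (ZMod p)) (hs : s ^ p = s + 1) (i : ℕ) :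
    s ^ p ^ i = s + algebraMap (ZMod p) (AlgebraicClosure (ZMod p)) (i : ZMod p) := by
  induction i with
  | zero => simp
  | succ i ih =>
    rw [pow_succ, pow_mul, ih, add_pow_char, hs, ← map_pow, ZMod.pow_card,
      Nat.cast_add, Nat.cast_one, map_add, map_one]
    ring

private lemma stmt19_pow_n (s : AlgebraicClosure (ZMod p)) (hs : s ^ p = s + 1) :
    s ^ (∑ i ∈ Finset.range p, p ^ i) = 1 := by
  haveI : NeZero p := ⟨(Fact.out : p.Prime).ne_zero⟩
  rw [← Finset.prod_pow_eq_pow_sum]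
  rw [Finset.prod_congr rfl fun i _ => stmt19_pow_iter p s hs i]
  have hre : (∏ i ∈ Finset.range p,
      (s + algebraMap (ZMod p) (AlgebraicClosure (ZMod p)) (i : ZMod p)))
      = ∏ c : ZMod p, (s + algebraMap (ZMod p) (AlgebraicClosure (ZMod p)) c) := by
    refine Finset.prod_bij (fun i _ => ((i : ℕ) : ZMod p)) (fun i _ => Finset.mem_univ _)
      ?_ ?_ ?_
    · intro a ha b hb hab
      have h2 := congrArg ZMod.val hab
      rwa [ZMod.val_cast_of_lt (Finset.mem_range.1 ha),
        ZMod.val_cast_of_lt (Finset.mem_range.1 hb)] at h2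
    · intro c _
      exact ⟨c.val, Finset.mem_range.2 (ZMod.val_lt c), ZMod.natCast_rightInverse c⟩
    · intro i _; rfl
  rw [hre, stmt19_prod_add p s, hs]
  ring

private lemma stmt19_W_monic : ((X : (ZMod p)[X]) ^ p - X - 1).Monic := by
  have hlt : 1 < p := (Fact.out : p.Prime).one_lt
  have h : ((X : (ZMod p)[X]) ^ p - X - 1) = X ^ p - (X + 1) := by ring
  rw [h]
  refine monic_X_pow_sub ?_
  have h1 : degree ((X : (ZMod p)[X]) + 1) = 1 := by
    simpa using degree_X_add_C (1 : ZMod p)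
  rw [h1]
  exact_mod_cast hlt

private lemma stmt19_W_natDegree : ((X : (ZMod p)[X]) ^ p - X - 1).natDegree = p := by
  have hlt : 1 < p := (Fact.out : p.Prime).one_lt
  have h : ((X : (ZMod p)[X]) ^ p - X - 1) = X ^ p - (X + 1) := by ring
  rw [h]
  have h1 : degree ((X : (ZMod p)[X]) + 1) < degree ((X : (ZMod p)[X]) ^ p) := by
    have h2 : degree ((X : (ZMod p)[X]) + 1) = 1 := by
      simpa using degree_X_add_C (1 : ZMod p)
    rw [h2, degree_X_pow]
    exact_mod_cast hlt
  rw [natDegree_eq_of_degree_eq (degree_sub_eq_left_of_degree_lt h1), natDegree_X_pow]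

private lemma stmt19_W_sep : ((X : (ZMod p)[X]) ^ p - X - 1).Separable := by
  rw [separable_def]
  have hder : derivative ((X : (ZMod p)[X]) ^ p - X - 1) = -1 := by
    simp [derivative_X_pow, ZMod.natCast_self]
  rw [hder]
  exact IsCoprime.neg_right isCoprime_one_right

/-- Step B : a common root satisfies `α ^ p = α + 1`. -/
private lemma stmt19_root (n : ℕ) (hn : n = ∑ i ∈ Finset.range p, p ^ i)
    (α : AlgebraicClosure (ZMod p))
    (H : ∀ lam : ZMod p,
      (α + algebraMap (ZMod p) (AlgebraicClosure (ZMod p)) lam) ^ n = 1) :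
    α ^ p = α + 1 := by
  set φ := algebraMap (ZMod p) (AlgebraicClosure (ZMod p)) with hφ
  have hppos : 0 < p := (Fact.out : p.Prime).pos
  set h : (AlgebraicClosure (ZMod p))[X] :=
    ∏ i ∈ Finset.range p, (X + C (α ^ p ^ i)) with hh
  have hmon : h.Monic := monic_prod_of_monic _ _ fun i _ => monic_X_add_C _
  have hdeg : h.natDegree = p := by
    rw [hh, natDegree_prod _ _ fun i _ => X_add_C_ne_zero _]
    rw [Finset.sum_congr rfl fun i _ => natDegree_X_add_C _]
    simp
  have hdeg1 : (h - 1).natDegree = p := by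
    have h1 : h - 1 = h - C 1 := by rw [map_one]
    rw [h1, natDegree_sub_C, hdeg]
  have hlc1 : (h - 1).leadingCoeff = 1 := by
    rw [leadingCoeff, hdeg1, coeff_sub, coeff_one, if_neg hppos.ne', sub_zero]
    have h3 := hmon.coeff_natDegree
    rwa [hdeg] at h3
  have hQmonic : (∏ c : ZMod p, (X - C (φ c)) : (AlgebraicClosure (ZMod p))[X]).Monic :=
    monic_prod_of_monic _ _ fun c _ => monic_X_sub_C _
  have hQdeg : (∏ c : ZMod p, (X - C (φ c)) : (AlgebraicClosure (ZMod p))[X]).natDegree = p := by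
    rw [natDegree_prod _ _ fun c _ => X_sub_C_ne_zero _]
    simp [natDegree_X_sub_C, ZMod.card]
  have hQ : (∏ c : ZMod p, (X - C (φ c)) : (AlgebraicClosure (ZMod p))[X]) ∣ h - 1 := by
    refine Finset.prod_dvd_of_coprime ?_ ?_
    · intro a _ b _ hab
      exact pairwise_coprime_X_sub_C (RingHom.injective φ) hab
    · intro c _
      rw [dvd_iff_isRoot]
      have heval : eval (φ c) h = 1 := by
        rw [hh, eval_prod]
        have hfac : ∀ i ∈ Finset.range p,
            eval (φ c) ((X : (AlgebraicClosure (ZMod p))[X]) + C (α ^ p ^ i))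
              = (α + φ c) ^ p ^ i := by
          intro i _
          rw [eval_add, eval_X, eval_C, add_pow_char_pow, ← map_pow,
            ZMod.pow_card_pow]
          ring
        rw [Finset.prod_congr rfl hfac, Finset.prod_pow_eq_pow_sum, ← hn]
        exact H c
      simp [IsRoot, heval]
  have hQeq : (∏ c : ZMod p, (X - C (φ c)) : (AlgebraicClosure (ZMod p))[X]) = h - 1 :=
    eq_of_dvd_of_natDegree_le_of_leadingCoeff hQ
      (by rw [hdeg1, hQdeg]) (by rw [hQmonic.leadingCoeff, hlc1])
  have hQ2 : (∏ c : ZMod p, (X - C (φ c)) : (AlgebraicClosure (ZMod p))[X]) = X ^ p - X := by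
    have h2 := congrArg (Polynomial.map φ) (stmt19_prod_univ p)
    simpa [Polynomial.map_prod] using h2
  have hkey : (X : (AlgebraicClosure (ZMod p))[X]) ^ p - X = h - 1 := hQ2 ▸ hQeq
  have heval0 : eval (-α) h = 0 := by
    rw [hh, eval_prod]
    refine Finset.prod_eq_zero (Finset.mem_range.2 hppos) ?_
    simp
  have hfin := congrArg (eval (-α)) hkey
  rw [eval_sub, eval_sub, eval_pow, eval_X, eval_one, heval0] at hfin
  have hneg : (-α) ^ p = -(α ^ p) := by
    rw [neg_pow, neg_one_pow_char (AlgebraicClosure (ZMod p)) p, neg_one_mul]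
  rw [hneg] at hfin
  linear_combination -hfin

end Stmt19Aux

theorem stmt_19 (p : ℕ) [Fact p.Prime] (n : ℕ) (hn : n = (p ^ p - 1) / (p - 1)) :
    Finset.univ.gcd (fun lam : ZMod p => ((X + C lam) ^ n - 1 : Polynomial (ZMod p))) =
        X ^ p - X - 1 ∧
      Set.ncard {α : AlgebraicClosure (ZMod p) |
          ∀ lam : ZMod p,
            (α + algebraMap (ZMod p) (AlgebraicClosure (ZMod p)) lam) ^ n = 1} = p := by
  classical
  set φ := algebraMap (ZMod p) (AlgebraicClosure (ZMod p)) with hφ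
  have hp2 : 2 ≤ p := (Fact.out : p.Prime).two_le
  have hppos : 0 < p := (Fact.out : p.Prime).pos
  have hnsum : n = ∑ i ∈ Finset.range p, p ^ i := by
    rw [hn, Nat.geomSum_eq hp2]
  have hn0 : n ≠ 0 := by
    rw [hnsum]
    intro h
    have h2 := Finset.sum_eq_zero_iff.1 h 0 (Finset.mem_range.2 hppos)
    simp at h2
  have hWmonic := stmt19_W_monic p
  have hWsep := stmt19_W_sep p
  have hmapW : ((X : (ZMod p)[X]) ^ p - X - 1).map φ = X ^ p - X - 1 := by
    simp [Polynomial.map_sub, Polynomial.map_pow, Polynomial.map_one]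
  have hmapf : ∀ lam : ZMod p,
      ((X + C lam) ^ n - 1 : (ZMod p)[X]).map φ = (X + C (φ lam)) ^ n - 1 := by
    intro lam
    simp [Polynomial.map_sub, Polynomial.map_pow, Polynomial.map_add,
      Polynomial.map_one]
  -- Step A : X^p - X - 1 divides each (X + C lam)^n - 1
  have hstepA : ∀ lam : ZMod p,
      ((X : (ZMod p)[X]) ^ p - X - 1) ∣ (X + C lam) ^ n - 1 := by
    intro lam
    rw [← map_dvd_map' φ, hmapW, hmapf]
    have hsepK : ((X : (AlgebraicClosure (ZMod p))[X]) ^ p - X - 1).Separable := by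
      rw [← hmapW]; exact hWsep.map
    have hmonK : ((X : (AlgebraicClosure (ZMod p))[X]) ^ p - X - 1).Monic := by
      rw [← hmapW]; exact hWmonic.map φ
    have hsplK : ((X : (AlgebraicClosure (ZMod p))[X]) ^ p - X - 1) =
        ((((X : (AlgebraicClosure (ZMod p))[X]) ^ p - X - 1).roots).map
          fun a => X - C a).prod :=
      (IsAlgClosed.splits _).eq_prod_roots_of_monic hmonK
    set t : Finset (AlgebraicClosure (ZMod p)) :=
      ⟨((X : (AlgebraicClosure (ZMod p))[X]) ^ p - X - 1).roots, nodup_roots hsepK⟩ with ht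
    have hsplK' : ((X : (AlgebraicClosure (ZMod p))[X]) ^ p - X - 1) =
        ∏ r ∈ t, (X - C r) := by
      rw [Finset.prod_eq_multiset_prod]; exact hsplK
    rw [hsplK']
    refine Finset.prod_dvd_of_coprime ?_ ?_
    · intro a _ b _ hab
      exact pairwise_coprime_X_sub_C Function.injective_id hab
    · intro r hr
      rw [dvd_iff_isRoot]
      have hrroot : r ^ p = r + 1 := by
        have hmem : r ∈ ((X : (AlgebraicClosure (ZMod p))[X]) ^ p - X - 1).roots := hr
        have h3 := (mem_roots hmonK.ne_zero).1 hmem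
        simp only [IsRoot, eval_sub, eval_pow, eval_X, eval_one] at h3
        linear_combination h3
      have hs : (r + φ lam) ^ p = (r + φ lam) + 1 := by
        rw [add_pow_char, hrroot, ← map_pow, ZMod.pow_card]
        ring
      have h4 := stmt19_pow_n p (r + φ lam) hs
      rw [← hnsum] at h4
      simp [IsRoot, h4]
  -- the gcd
  set G := Finset.univ.gcd
    (fun lam : ZMod p => ((X + C lam) ^ n - 1 : Polynomial (ZMod p))) with hG
  have hWG : ((X : (ZMod p)[X]) ^ p - X - 1) ∣ G :=
    Finset.dvd_gcd fun lam _ => hstepA lam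
  have hG0 : G ≠ 0 := by
    intro h0
    have h1 := Finset.gcd_eq_zero_iff.1 h0 0 (Finset.mem_univ 0)
    have h2 := congrArg (eval 0) h1
    simp [zero_pow hn0] at h2
  have hmapG0 : G.map φ ≠ 0 := by
    intro hz
    exact hG0 (Polynomial.map_injective φ (RingHom.injective φ)
      (by rw [hz, Polynomial.map_zero]))
  have hGmonic : G.Monic := by
    have h1 := Polynomial.monic_normalize hG0
    rwa [Finset.normalize_gcd] at h1
  have hGW : G ∣ (X : (ZMod p)[X]) ^ p - X - 1 := by
    rw [← map_dvd_map' φ, hmapW]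
    have hnF : ((n : ZMod p)) ≠ 0 := by
      have h1 : ((n : ZMod p)) = 1 := by
        rw [hnsum]
        push_cast
        rw [ZMod.natCast_self]
        rw [Finset.sum_eq_single 0 (fun i _ hi => zero_pow hi)
          (fun h => absurd (Finset.mem_range.2 hppos) h)]
        simp
      rw [h1]; exact one_ne_zero
    have hXn : ((X : (ZMod p)[X]) ^ n - 1).Separable :=
      X_pow_sub_one_separable_iff.2 hnF
    have hGsep : G.Separable := by
      refine hXn.of_dvd ?_
      have h1 : G ∣ (X + C (0 : ZMod p)) ^ n - 1 :=
        Finset.gcd_dvd (Finset.mem_univ 0)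
      simpa using h1
    have hGsepK : (G.map φ).Separable := hGsep.map
    have hGsplit : G.map φ = C (G.map φ).leadingCoeff *
        (((G.map φ).roots).map fun a => X - C a).prod :=
      (IsAlgClosed.splits _).eq_prod_roots
    set t : Finset (AlgebraicClosure (ZMod p)) :=
      ⟨(G.map φ).roots, nodup_roots hGsepK⟩ with ht
    have hGsplit' : G.map φ = C (G.map φ).leadingCoeff * ∏ r ∈ t, (X - C r) := by
      rw [Finset.prod_eq_multiset_prod]; exact hGsplit
    have hprodvd : (∏ r ∈ t, (X - C r)) ∣
        (X : (AlgebraicClosure (ZMod p))[X]) ^ p - X - 1 := by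
      refine Finset.prod_dvd_of_coprime ?_ ?_
      · intro a _ b _ hab
        exact pairwise_coprime_X_sub_C Function.injective_id hab
      · intro r hr
        rw [dvd_iff_isRoot]
        have hr0 : eval r (G.map φ) = 0 := by
          have hmem : r ∈ (G.map φ).roots := hr
          exact ((mem_roots hmapG0).1 hmem)
        have hroot : ∀ lam : ZMod p, (r + φ lam) ^ n = 1 := by
          intro lam
          have hdvd : G.map φ ∣ (X + C (φ lam)) ^ n - 1 := by
            rw [← hmapf]
            exact Polynomial.map_dvd φ (Finset.gcd_dvd (Finset.mem_univ lam))
          obtain ⟨q, hq⟩ := hdvd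
          have h2 := congrArg (eval r) hq
          rw [eval_mul, hr0, zero_mul, eval_sub, eval_pow, eval_add, eval_X,
            eval_C, eval_one] at h2
          linear_combination h2
        have hα := stmt19_root p n hnsum r hroot
        simp only [IsRoot, eval_sub, eval_pow, eval_X, eval_one]
        linear_combination hα
    rw [hGsplit']
    exact (IsUnit.mul_left_dvd (isUnit_C.2 (IsUnit.mk0 _
      (leadingCoeff_ne_zero.2 hmapG0)))).2 hprodvd
  have hGeqW : G = (X : (ZMod p)[X]) ^ p - X - 1 :=
    Polynomial.eq_of_monic_of_associated hGmonic hWmonic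
      (associated_of_dvd_dvd hGW hWG)
  refine ⟨hGeqW, ?_⟩
  -- counting part
  have hset : {α : AlgebraicClosure (ZMod p) | ∀ lam : ZMod p, (α + φ lam) ^ n = 1}
      = ((X : (ZMod p)[X]) ^ p - X - 1).rootSet (AlgebraicClosure (ZMod p)) := by
    ext α
    simp only [Set.mem_setOf_eq, mem_rootSet]
    constructor
    · intro H
      refine ⟨hWmonic.ne_zero, ?_⟩
      have hα := stmt19_root p n hnsum α H
      simp only [map_sub, map_pow, aeval_X, map_one]
      linear_combination hα
    · rintro ⟨-, hα⟩ lam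
      have hα' : α ^ p = α + 1 := by
        simp only [map_sub, map_pow, aeval_X, map_one] at hα
        linear_combination hα
      have hs : (α + φ lam) ^ p = (α + φ lam) + 1 := by
        rw [add_pow_char, hα', ← map_pow, ZMod.pow_card]
        ring
      have h4 := stmt19_pow_n p (α + φ lam) hs
      rwa [← hnsum] at h4
  rw [hset, ← Nat.card_coe_set_eq, Nat.card_eq_fintype_card,
    card_rootSet_eq_natDegree hWsep (IsAlgClosed.splits _),
    stmt19_W_natDegree]
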